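/- For every integer L ≥ 1 and every image f : ZMod N × ZMod M → ℝ, TV_i(f) ≤ TV_L(f) ≤ TV_a(f). -/

import Mathlib

open Real

/-- Periodic discrete partial difference in the first (column) direction. -/
def gradX {N M : ℕ} (f : ZMod N × ZMod M → ℝ) : ZMod N × ZMod M → ℝ :=
  fun p => f p - f (p.1 - 1, p.2)

/-- Periodic discrete partial difference in the second (row) direction. -/
def gradY {N M : ℕ} (f : ZMod N × ZMod M → ℝ) : ZMod N × ZMod M → ℝ :=
  fun p => f p - f (p.1, p.2 - 1)

/-- Anisotropic total variation. -/
noncomputable def TVa {N M : ℕ} [NeZero N] [NeZero M] (f : ZMod N × ZMod M → ℝ) : ℝ :=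
  ∑ p : ZMod N × ZMod M, (|gradX f p| + |gradY f p|)

/-- Isotropic total variation. -/
noncomputable def TVi {N M : ℕ} [NeZero N] [NeZero M] (f : ZMod N × ZMod M → ℝ) : ℝ :=
  ∑ p : ZMod N × ZMod M, Real.sqrt ((gradX f p) ^ 2 + (gradY f p) ^ 2)

/-- Normalization constant `d_L`. -/
noncomputable def dL (L : ℕ) : ℝ :=
  (∑ k ∈ Finset.range L,
      (Real.cos (π * (k : ℝ) / (2 * (L : ℝ))) + Real.sin (π * (k : ℝ) / (2 * (L : ℝ)))))⁻¹

/-- Multidirectional total variation `TV_L`. -/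
noncomputable def TVL {N M : ℕ} [NeZero N] [NeZero M] (L : ℕ)
    (f : ZMod N × ZMod M → ℝ) : ℝ :=
  dL L * ∑ p : ZMod N × ZMod M, ∑ k ∈ Finset.range L,
    (|gradX f p * Real.cos (π * (k : ℝ) / (2 * (L : ℝ))) +
        gradY f p * Real.sin (π * (k : ℝ) / (2 * (L : ℝ)))| +
     |gradY f p * Real.cos (π * (k : ℝ) / (2 * (L : ℝ))) -
        gradX f p * Real.sin (π * (k : ℝ) / (2 * (L : ℝ)))|)


noncomputable def CC (L : ℕ) : ℝ := ∑ k ∈ Finset.range L, Real.cos (π * (k:ℝ) / (2 * (L:ℝ)))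
noncomputable def SS (L : ℕ) : ℝ := ∑ k ∈ Finset.range L, Real.sin (π * (k:ℝ) / (2 * (L:ℝ)))

lemma SS_eq (L : ℕ) (hL : 1 ≤ L) : SS L = CC L - 1 := by
  have hL0 : (L:ℝ) ≠ 0 := Nat.cast_ne_zero.2 (by omega)
  have h1 : SS L = ∑ k ∈ Finset.range L, Real.sin (π * ((L - 1 - k : ℕ):ℝ) / (2*(L:ℝ))) :=
    (Finset.sum_range_reflect (fun k => Real.sin (π * (k:ℝ) / (2*(L:ℝ)))) L).symm
  have h2 : ∀ k ∈ Finset.range L, Real.sin (π * ((L - 1 - k : ℕ):ℝ) / (2*(L:ℝ)))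
      = Real.cos (π * ((k:ℝ)+1) / (2*(L:ℝ))) := by
    intro k hk
    have hk' : k < L := Finset.mem_range.1 hk
    have hc : ((L - 1 - k : ℕ) : ℝ) = (L:ℝ) - 1 - (k:ℝ) := by
      have h : L - 1 - k = L - (1 + k) := by omega
      rw [h, Nat.cast_sub (by omega)]; push_cast; ring
    rw [hc, show π * ((L:ℝ) - 1 - (k:ℝ)) / (2*(L:ℝ)) = π/2 - π * ((k:ℝ)+1) / (2*(L:ℝ)) by
      field_simp; ring, Real.sin_pi_div_two_sub]
  rw [h1, Finset.sum_congr rfl h2]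
  have h3 := Finset.sum_range_succ' (fun k => Real.cos (π * (k:ℝ) / (2*(L:ℝ)))) L
  have h4 := Finset.sum_range_succ (fun k => Real.cos (π * (k:ℝ) / (2*(L:ℝ)))) L
  have h5 : ∀ k ∈ Finset.range L, Real.cos (π * ((k:ℝ)+1) / (2*(L:ℝ)))
      = Real.cos (π * (((k+1:ℕ)):ℝ) / (2*(L:ℝ))) := by intro k _; push_cast; ring_nf
  have h6 : Real.cos (π * ((L:ℕ):ℝ) / (2*(L:ℝ))) = 0 := by
    rw [show π * ((L:ℕ):ℝ) / (2*(L:ℝ)) = π/2 by field_simp, Real.cos_pi_div_two]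
  rw [Finset.sum_congr rfl h5]
  simp only [h6, Nat.cast_zero, mul_zero, zero_div, Real.cos_zero] at h3 h4
  unfold CC
  linarith [h3, h4]

lemma CC_id (L : ℕ) (hL : 1 ≤ L) :
    Real.sin (π/(4*(L:ℝ))) * (2 * CC L - 1) = Real.cos (π/(4*(L:ℝ))) := by
  have hL0 : (L:ℝ) ≠ 0 := Nat.cast_ne_zero.2 (by omega)
  set β : ℝ := π/(4*(L:ℝ)) with hβ
  have tele := Finset.sum_range_sub (fun k => Real.sin ((2*(k:ℝ)-1)*β)) L
  have step : ∀ k ∈ Finset.range L,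
      Real.sin ((2*((k+1:ℕ):ℝ)-1)*β) - Real.sin ((2*(k:ℝ)-1)*β)
      = 2 * Real.sin β * Real.cos (π * (k:ℝ) / (2*(L:ℝ))) := by
    intro k _
    have hθ : π * (k:ℝ) / (2*(L:ℝ)) = 2*(k:ℝ)*β := by rw [hβ]; field_simp; ring
    rw [hθ]
    push_cast
    rw [show (2*((k:ℝ)+1)-1)*β = 2*(k:ℝ)*β + β by ring,
        show (2*(k:ℝ)-1)*β = 2*(k:ℝ)*β - β by ring,
        Real.sin_add, Real.sin_sub]
    ring
  rw [Finset.sum_congr rfl step, ← Finset.mul_sum] at tele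
  have hC : (∑ k ∈ Finset.range L, Real.cos (π * (k:ℝ) / (2*(L:ℝ)))) = CC L := rfl
  rw [hC] at tele
  have hend : Real.sin ((2*((L:ℕ):ℝ)-1)*β) = Real.cos β := by
    rw [show (2*((L:ℕ):ℝ)-1)*β = π/2 - β by rw [hβ]; field_simp; ring, Real.sin_pi_div_two_sub]
  rw [hend] at tele
  simp only [Nat.cast_zero] at tele
  rw [show (2*(0:ℝ)-1)*β = -β by ring, Real.sin_neg] at tele
  linear_combination tele

lemma scalar_key (L : ℕ) (hL : 1 ≤ L) (φ : ℝ) :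
    CC L + SS L ≤ ∑ k ∈ Finset.range L,
      (|Real.cos (φ - π * (k:ℝ) / (2*(L:ℝ)))| + |Real.sin (φ - π * (k:ℝ) / (2*(L:ℝ)))|) := by
  have hL0 : (0:ℝ) < L := by exact_mod_cast hL
  have hL1 : (1:ℝ) ≤ L := by exact_mod_cast hL
  set p : ℝ := π/(2*(L:ℝ)) with hp
  clear_value p
  have hppos : 0 < p := by rw [hp]; positivity
  have hθ : ∀ k : ℕ, π * (k:ℝ) / (2*(L:ℝ)) = (k:ℝ) * p := by intro k; rw [hp]; ring
  set F : ℝ → ℝ := fun x => ∑ k ∈ Finset.range L, (|Real.cos (x - (k:ℝ)*p)| + |Real.sin (x - (k:ℝ)*p)|)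
    with hF
  have hgoal : (∑ k ∈ Finset.range L,
      (|Real.cos (φ - π * (k:ℝ) / (2*(L:ℝ)))| + |Real.sin (φ - π * (k:ℝ) / (2*(L:ℝ)))|)) = F φ :=
    Finset.sum_congr rfl fun k _ => by rw [hθ]
  rw [hgoal]
  have hLp : (L:ℝ) * p = π/2 := by rw [hp]; field_simp
  have hper : Function.Periodic F p := by
    intro x
    obtain ⟨n, rfl⟩ : ∃ n, L = n + 1 := ⟨L - 1, by omega⟩
    show (∑ k ∈ Finset.range (n+1), (|Real.cos (x + p - (k:ℝ)*p)| + |Real.sin (x + p - (k:ℝ)*p)|)) = F x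
    rw [Finset.sum_range_succ' (fun k => |Real.cos (x + p - (k:ℝ)*p)| + |Real.sin (x + p - (k:ℝ)*p)|) n,
        hF]
    show _ = ∑ k ∈ Finset.range (n+1), (|Real.cos (x - (k:ℝ)*p)| + |Real.sin (x - (k:ℝ)*p)|)
    rw [Finset.sum_range_succ (fun k => |Real.cos (x - (k:ℝ)*p)| + |Real.sin (x - (k:ℝ)*p)|) n]
    have e1 : ∀ k : ℕ, x + p - ((k+1:ℕ):ℝ)*p = x - (k:ℝ)*p := by intro k; push_cast; ring
    have e2 : x + p - ((0:ℕ):ℝ)*p = (x - (n:ℝ)*p) + π/2 := by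
      push_cast at hLp ⊢; linarith
    simp only [e1, e2, Real.cos_add_pi_div_two, Real.sin_add_pi_div_two, abs_neg]
    ring
  clear_value F
  obtain ⟨δ, hδ0, hδ1, hFφ⟩ : ∃ δ, 0 ≤ δ ∧ δ < p ∧ F φ = F δ :=
    ⟨φ - ⌊φ/p⌋ * p, Int.sub_floor_div_mul_nonneg φ hppos, Int.sub_floor_div_mul_lt φ hppos,
      (hper.sub_int_mul_eq ⌊φ/p⌋).symm⟩
  rw [hFφ, hF]
  have hlow : (∑ k ∈ Finset.range L,
      (Real.cos (δ - (k:ℝ)*p) + Real.sin ((k:ℝ)*p - δ) + ite (k=0) (2*Real.sin δ) 0)) ≤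
      ∑ k ∈ Finset.range L, (|Real.cos (δ - (k:ℝ)*p)| + |Real.sin (δ - (k:ℝ)*p)|) := by
    apply Finset.sum_le_sum
    intro k _
    by_cases hk : k = 0
    · subst hk
      simp only [if_pos, Nat.cast_zero, zero_mul, sub_zero, zero_sub, Real.sin_neg]
      have h1 := le_abs_self (Real.cos δ)
      have h2 := le_abs_self (Real.sin δ)
      linarith
    · rw [if_neg hk, add_zero,
        show (k:ℝ)*p - δ = -(δ - (k:ℝ)*p) by ring, Real.sin_neg]
      have h1 := le_abs_self (Real.cos (δ - (k:ℝ)*p))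
      have h2 := neg_le_abs (Real.sin (δ - (k:ℝ)*p))
      linarith
  have eCC : CC L = ∑ k ∈ Finset.range L, Real.cos ((k:ℝ)*p) :=
    Finset.sum_congr rfl fun k _ => by rw [hθ]
  have eSS : SS L = ∑ k ∈ Finset.range L, Real.sin ((k:ℝ)*p) :=
    Finset.sum_congr rfl fun k _ => by rw [hθ]
  have hsum : (∑ k ∈ Finset.range L,
      (Real.cos (δ - (k:ℝ)*p) + Real.sin ((k:ℝ)*p - δ) + ite (k=0) (2*Real.sin δ) 0))
      = (Real.cos δ - Real.sin δ) * CC L + (Real.cos δ + Real.sin δ) * SS L + 2*Real.sin δ := by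
    rw [Finset.sum_add_distrib, Finset.sum_ite_eq' (Finset.range L) 0 (fun _ => 2*Real.sin δ),
        if_pos (Finset.mem_range.2 (by omega))]
    congr 1
    rw [eCC, eSS, Finset.mul_sum, Finset.mul_sum, ← Finset.sum_add_distrib]
    exact Finset.sum_congr rfl fun k _ => by rw [Real.cos_sub, Real.sin_sub]; ring
  set β : ℝ := π/(4*(L:ℝ)) with hβ
  clear_value β
  have hβpos : 0 < β := by rw [hβ]; positivity
  have hβle : β ≤ π/4 := by
    rw [hβ, div_le_div_iff₀ (by positivity) (by norm_num)]
    nlinarith [Real.pi_pos]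
  have hp2β : p = 2*β := by rw [hp, hβ]; field_simp; ring
  have hsinβ : 0 < Real.sin β := Real.sin_pos_of_pos_of_lt_pi hβpos (by nlinarith [Real.pi_pos])
  have hid := CC_id L hL
  rw [← hβ] at hid
  have hScc := SS_eq L hL
  have hcos : Real.cos β ≤ Real.cos (δ - β) := by
    rw [← Real.cos_abs (δ - β)]
    apply Real.cos_le_cos_of_nonneg_of_le_pi (abs_nonneg _) (by nlinarith [Real.pi_pos])
    rw [abs_le]
    constructor <;> nlinarith
  have hkey : 2*CC L - 1 ≤ (2*CC L - 1) * Real.cos δ + Real.sin δ := by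
    have h1 : Real.sin β * (2*CC L - 1) ≤ Real.sin β * ((2*CC L - 1) * Real.cos δ + Real.sin δ) := by
      have e : Real.sin β * ((2*CC L - 1) * Real.cos δ + Real.sin δ) = Real.cos (δ - β) := by
        rw [Real.cos_sub]; linear_combination Real.cos δ * hid
      rw [e]
      calc Real.sin β * (2*CC L - 1) = Real.cos β := hid
        _ ≤ Real.cos (δ - β) := hcos
    exact le_of_mul_le_mul_left h1 hsinβ
  calc CC L + SS L = 2*CC L - 1 := by rw [hScc]; ring
    _ ≤ (2*CC L - 1) * Real.cos δ + Real.sin δ := hkey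
    _ = (Real.cos δ - Real.sin δ) * CC L + (Real.cos δ + Real.sin δ) * SS L + 2*Real.sin δ := by
        rw [hScc]; ring
    _ = _ := hsum.symm
    _ ≤ _ := hlow

lemma CS_pos (L : ℕ) (hL : 1 ≤ L) : 0 < CC L + SS L := by
  have hL0 : (0:ℝ) < L := by exact_mod_cast hL
  have hL1 : (1:ℝ) ≤ L := by exact_mod_cast hL
  have hβpos : 0 < π/(4*(L:ℝ)) := by positivity
  have hβle : π/(4*(L:ℝ)) ≤ π/4 := by
    rw [div_le_div_iff₀ (by positivity) (by norm_num)]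
    nlinarith [Real.pi_pos]
  have hsinβ : 0 < Real.sin (π/(4*(L:ℝ))) :=
    Real.sin_pos_of_pos_of_lt_pi hβpos (by nlinarith [Real.pi_pos])
  have hcosβ : 0 < Real.cos (π/(4*(L:ℝ))) :=
    Real.cos_pos_of_mem_Ioo ⟨by nlinarith [Real.pi_pos], by nlinarith [Real.pi_pos]⟩
  have hid := CC_id L hL
  have hS := SS_eq L hL
  nlinarith [hid, hS]

lemma point_lower (L : ℕ) (hL : 1 ≤ L) (x y : ℝ) :
    (CC L + SS L) * Real.sqrt (x^2 + y^2) ≤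
    ∑ k ∈ Finset.range L,
      (|x * Real.cos (π * (k:ℝ) / (2*(L:ℝ))) + y * Real.sin (π * (k:ℝ) / (2*(L:ℝ)))| +
       |y * Real.cos (π * (k:ℝ) / (2*(L:ℝ))) - x * Real.sin (π * (k:ℝ) / (2*(L:ℝ)))|) := by
  set z : ℂ := ⟨x, y⟩ with hz
  have hx : ‖z‖ * Real.cos z.arg = x := Complex.norm_mul_cos_arg z
  have hy : ‖z‖ * Real.sin z.arg = y := Complex.norm_mul_sin_arg z
  have hrnn : 0 ≤ ‖z‖ := norm_nonneg z
  have hr : Real.sqrt (x^2 + y^2) = ‖z‖ := by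
    rw [Complex.norm_def, Complex.normSq_apply]
    norm_num [hz, pow_two]
  have hterm : ∀ k ∈ Finset.range L,
      (|x * Real.cos (π * (k:ℝ) / (2*(L:ℝ))) + y * Real.sin (π * (k:ℝ) / (2*(L:ℝ)))| +
       |y * Real.cos (π * (k:ℝ) / (2*(L:ℝ))) - x * Real.sin (π * (k:ℝ) / (2*(L:ℝ)))|)
      = ‖z‖ *
        (|Real.cos (z.arg - π * (k:ℝ) / (2*(L:ℝ)))| + |Real.sin (z.arg - π * (k:ℝ) / (2*(L:ℝ)))|) := by
    intro k _
    rw [← hx, ← hy,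
      show ‖z‖ * Real.cos z.arg * Real.cos (π * (k:ℝ) / (2*(L:ℝ))) +
          ‖z‖ * Real.sin z.arg * Real.sin (π * (k:ℝ) / (2*(L:ℝ)))
        = ‖z‖ * Real.cos (z.arg - π * (k:ℝ) / (2*(L:ℝ))) by rw [Real.cos_sub]; ring,
      show ‖z‖ * Real.sin z.arg * Real.cos (π * (k:ℝ) / (2*(L:ℝ))) -
          ‖z‖ * Real.cos z.arg * Real.sin (π * (k:ℝ) / (2*(L:ℝ)))
        = ‖z‖ * Real.sin (z.arg - π * (k:ℝ) / (2*(L:ℝ))) by rw [Real.sin_sub]; ring,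
      abs_mul, abs_mul, abs_of_nonneg hrnn, mul_add]
  rw [Finset.sum_congr rfl hterm, ← Finset.mul_sum, hr, mul_comm (CC L + SS L)]
  exact mul_le_mul_of_nonneg_left (scalar_key L hL z.arg) hrnn

lemma point_upper (L : ℕ) (hL : 1 ≤ L) (x y : ℝ) :
    (∑ k ∈ Finset.range L,
      (|x * Real.cos (π * (k:ℝ) / (2*(L:ℝ))) + y * Real.sin (π * (k:ℝ) / (2*(L:ℝ)))| +
       |y * Real.cos (π * (k:ℝ) / (2*(L:ℝ))) - x * Real.sin (π * (k:ℝ) / (2*(L:ℝ)))|))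
      ≤ (CC L + SS L) * (|x| + |y|) := by
  have hL0 : (0:ℝ) < L := by exact_mod_cast hL
  have step : ∀ k ∈ Finset.range L,
      (|x * Real.cos (π * (k:ℝ) / (2*(L:ℝ))) + y * Real.sin (π * (k:ℝ) / (2*(L:ℝ)))| +
       |y * Real.cos (π * (k:ℝ) / (2*(L:ℝ))) - x * Real.sin (π * (k:ℝ) / (2*(L:ℝ)))|)
      ≤ (Real.cos (π * (k:ℝ) / (2*(L:ℝ))) + Real.sin (π * (k:ℝ) / (2*(L:ℝ)))) * (|x| + |y|) := by
    intro k hk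
    have hk' : (k:ℝ) < L := by exact_mod_cast Finset.mem_range.1 hk
    have hθ0 : 0 ≤ π * (k:ℝ) / (2*(L:ℝ)) := by positivity
    have hθ1 : π * (k:ℝ) / (2*(L:ℝ)) ≤ π/2 := by
      rw [div_le_div_iff₀ (by positivity) (by norm_num)]
      nlinarith [Real.pi_pos]
    have hc : 0 ≤ Real.cos (π * (k:ℝ) / (2*(L:ℝ))) :=
      Real.cos_nonneg_of_mem_Icc ⟨by linarith [Real.pi_pos], hθ1⟩
    have hs : 0 ≤ Real.sin (π * (k:ℝ) / (2*(L:ℝ))) :=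
      Real.sin_nonneg_of_nonneg_of_le_pi hθ0 (by linarith [Real.pi_pos])
    have h1 : |x * Real.cos (π * (k:ℝ) / (2*(L:ℝ))) + y * Real.sin (π * (k:ℝ) / (2*(L:ℝ)))|
        ≤ |x| * Real.cos (π * (k:ℝ) / (2*(L:ℝ))) + |y| * Real.sin (π * (k:ℝ) / (2*(L:ℝ))) := by
      refine (abs_add_le _ _).trans ?_
      rw [abs_mul, abs_mul, abs_of_nonneg hc, abs_of_nonneg hs]
    have h2 : |y * Real.cos (π * (k:ℝ) / (2*(L:ℝ))) - x * Real.sin (π * (k:ℝ) / (2*(L:ℝ)))|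
        ≤ |y| * Real.cos (π * (k:ℝ) / (2*(L:ℝ))) + |x| * Real.sin (π * (k:ℝ) / (2*(L:ℝ))) := by
      refine (abs_sub _ _).trans ?_
      rw [abs_mul, abs_mul, abs_of_nonneg hc, abs_of_nonneg hs]
    nlinarith [h1, h2]
  calc _ ≤ ∑ k ∈ Finset.range L,
      (Real.cos (π * (k:ℝ) / (2*(L:ℝ))) + Real.sin (π * (k:ℝ) / (2*(L:ℝ)))) * (|x| + |y|) :=
        Finset.sum_le_sum step
    _ = (CC L + SS L) * (|x| + |y|) := by
        rw [← Finset.sum_mul, Finset.sum_add_distrib]; rfl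

theorem stmt5 {N M : ℕ} [NeZero N] [NeZero M] (L : ℕ) (hL : 1 ≤ L)
    (f : ZMod N × ZMod M → ℝ) :
    TVi f ≤ TVL L f ∧ TVL L f ≤ TVa f := by
  have hCS : 0 < CC L + SS L := CS_pos L hL
  have hd : dL L = (CC L + SS L)⁻¹ := by
    unfold dL CC SS; rw [Finset.sum_add_distrib]
  constructor
  · unfold TVi TVL
    rw [hd, le_inv_mul_iff₀ hCS, Finset.mul_sum]
    exact Finset.sum_le_sum fun q _ => point_lower L hL (gradX f q) (gradY f q)
  · unfold TVL TVa
    rw [hd, inv_mul_le_iff₀ hCS, Finset.mul_sum]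
    exact Finset.sum_le_sum fun q _ => point_upper L hL (gradX f q) (gradY f q)
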